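/- There exists a constant c>0 such that for every n≥1, every bounded measurable function f on [0,1], and i∈{0,1}: sup_{x∈[0,1]} |(S^i f)(x) − (S^i_n f)(x)| ≤ (c/n)·sup_{y∈[0,1]}|f(y)|. -/
import Mathlib


open MeasureTheory

/-- the operators `S^0 f (x) = ∫_0^x f` and `S^1 f (x) = ∫_x^1 f`. -/
noncomputable def Sop (i : Fin 2) (f : ℝ → ℝ) (x : ℝ) : ℝ :=
  if i = 0 then ∫ t in (0:ℝ)..x, f t else ∫ t in x..(1:ℝ), f t

/-- the kernel `K^0_n(x,y) = 1` iff `⌊(n+1)x⌋ ≥ ⌊ny⌋`. -/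
noncomputable def K0n (n : ℕ) (x y : ℝ) : ℝ :=
  if ⌊((n : ℝ) + 1) * x⌋ ≥ ⌊(n : ℝ) * y⌋ then 1 else 0

/-- the kernels `K^i_n`, `i = 0, 1`, with `K^1_n = 1 - K^0_n`. -/
noncomputable def Kn (i : Fin 2) (n : ℕ) (x y : ℝ) : ℝ :=
  if i = 0 then K0n n x y else 1 - K0n n x y

/-- the approximating integral operators `S^i_n f (x) = ∫_0^1 K^i_n(x,y) f(y) dy`. -/
noncomputable def Sopn (i : Fin 2) (n : ℕ) (f : ℝ → ℝ) (x : ℝ) : ℝ :=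
  ∫ y in (0:ℝ)..1, Kn i n x y * f y

/-- The operators `S^i_n` approximate `S^i` with error `O(1/n)` in the operator norm:
`sup_{x∈[0,1]} |S^i f(x) - S^i_n f(x)| ≤ (c/n)·sup_{y∈[0,1]} |f(y)|` for every bounded
measurable `f`. -/
theorem Sop_approx :
    ∃ c : ℝ, 0 < c ∧ ∀ n : ℕ, 1 ≤ n → ∀ f : ℝ → ℝ, Measurable f →
      (∃ M : ℝ, ∀ y ∈ Set.Icc (0:ℝ) 1, |f y| ≤ M) → ∀ i : Fin 2,
        (⨆ x : Set.Icc (0:ℝ) 1, |Sop i f x - Sopn i n f x|) ≤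
          (c / n) * ⨆ y : Set.Icc (0:ℝ) 1, |f y| := by
  refine ⟨2, by norm_num, ?_⟩
  intro n hn f hf hbdd
  obtain ⟨M, hM⟩ := hbdd
  haveI : Nonempty (Set.Icc (0:ℝ) 1) := ⟨⟨0, by norm_num⟩⟩
  set M₀ := ⨆ y : Set.Icc (0:ℝ) 1, |f y| with hM₀def
  have hbdd' : BddAbove (Set.range fun y : Set.Icc (0:ℝ) 1 => |f y|) :=
    ⟨M, by rintro _ ⟨y, rfl⟩; exact hM y y.2⟩
  have hM₀le : ∀ y ∈ Set.Icc (0:ℝ) 1, |f y| ≤ M₀ := fun y hy =>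
    le_ciSup hbdd' ⟨y, hy⟩
  have hM₀0 : 0 ≤ M₀ :=
    le_trans (abs_nonneg _) (hM₀le 0 ⟨le_refl 0, zero_le_one⟩)
  have hnpos : (0:ℝ) < n := by exact_mod_cast hn
  -- integrability of f on [0,1]
  have hInt : IntegrableOn f (Set.Icc 0 1) := by
    refine Measure.integrableOn_of_bounded (M := M₀) (by simp) hf.aestronglyMeasurable ?_
    refine (ae_restrict_iff' measurableSet_Icc).2 (ae_of_all _ fun y hy => ?_)
    simpa using hM₀le y hy
  have hII : ∀ a b : ℝ, a ∈ Set.Icc (0:ℝ) 1 → b ∈ Set.Icc (0:ℝ) 1 →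
      IntervalIntegrable f volume a b := fun a b ha hb =>
    (hInt.mono_set (Set.uIcc_subset_Icc ha hb)).intervalIntegrable
  -- the main computation for i = 0
  have hSopn0 : ∀ x ∈ Set.Icc (0:ℝ) 1,
      Sopn 0 n f x = ∫ t in (0:ℝ)..(min 1 ((⌊((n:ℝ)+1)*x⌋ + 1)/n)), f t := by
    intro x hx
    set b : ℝ := ((⌊((n:ℝ)+1)*x⌋ : ℝ) + 1)/n with hbdef
    have hcond : ∀ y : ℝ, (⌊(n:ℝ)*y⌋ ≤ ⌊((n:ℝ)+1)*x⌋) ↔ y < b := by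
      intro y
      rw [hbdef, lt_div_iff₀ hnpos, ← Int.lt_add_one_iff]
      rw [show ((⌊((n:ℝ)+1)*x⌋ : ℝ) + 1) = ((⌊((n:ℝ)+1)*x⌋ + 1 : ℤ) : ℝ) by push_cast; ring,
        ← Int.floor_lt]
      rw [mul_comm]
    have hker : ∀ y : ℝ, Kn 0 n x y * f y = Set.indicator (Set.Iio b) f y := by
      intro y
      simp only [Kn, K0n, ge_iff_le, hcond y, if_pos rfl]
      by_cases h : y < b <;> simp [Set.indicator, h]
    have hb0 : (0:ℝ) ≤ min 1 b := by
      refine le_min zero_le_one ?_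
      have h1 : (0:ℤ) ≤ ⌊((n:ℝ)+1)*x⌋ := Int.floor_nonneg.2 (mul_nonneg (by positivity) hx.1)
      rw [hbdef]
      have : (0:ℝ) ≤ (⌊((n:ℝ)+1)*x⌋ : ℝ) := by exact_mod_cast h1
      positivity
    rw [Sopn]
    simp only [hker]
    rw [intervalIntegral.integral_of_le (by norm_num : (0:ℝ) ≤ 1),
      intervalIntegral.integral_of_le hb0,
      setIntegral_indicator measurableSet_Iio]
    rcases le_or_gt b 1 with hb1 | hb1
    · rw [min_eq_right hb1]
      have hset : Set.Ioc (0:ℝ) 1 ∩ Set.Iio b = Set.Ioo 0 b := by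
        ext y
        simp only [Set.mem_inter_iff, Set.mem_Ioc, Set.mem_Iio, Set.mem_Ioo]
        exact ⟨fun h => ⟨h.1.1, h.2⟩, fun h => ⟨⟨h.1, le_trans h.2.le hb1⟩, h.2⟩⟩
      rw [hset, ← integral_Ioc_eq_integral_Ioo]
    · rw [min_eq_left hb1.le]
      have hset : Set.Ioc (0:ℝ) 1 ∩ Set.Iio b = Set.Ioc 0 1 := by
        refine Set.inter_eq_left.2 fun y hy => lt_of_le_of_lt hy.2 hb1
      rw [hset]
  -- the estimate for i = 0
  have key0 : ∀ x ∈ Set.Icc (0:ℝ) 1, |Sop 0 f x - Sopn 0 n f x| ≤ 2/n * M₀ := by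
    intro x hx
    set b : ℝ := ((⌊((n:ℝ)+1)*x⌋ : ℝ) + 1)/n with hbdef
    have hfloor_le : (⌊((n:ℝ)+1)*x⌋ : ℝ) ≤ ((n:ℝ)+1)*x := Int.floor_le _
    have hlt_floor : ((n:ℝ)+1)*x < (⌊((n:ℝ)+1)*x⌋ : ℝ) + 1 := Int.lt_floor_add_one _
    have hxb : x ≤ b := by
      rw [hbdef, le_div_iff₀ hnpos]
      nlinarith [hx.1]
    set c : ℝ := min 1 b with hcdef
    have hxc : x ≤ c := le_min hx.2 hxb
    have hc1 : c ≤ 1 := min_le_left _ _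
    have hcx : c - x ≤ 2/n := by
      have hb2 : b ≤ x + 2/n := by
        rw [hbdef, div_le_iff₀ hnpos]
        have h2n : 2/(n:ℝ) * n = 2 := div_mul_cancel₀ 2 (ne_of_gt hnpos)
        nlinarith [hx.2]
      calc c - x ≤ b - x := by simp [hcdef, min_le_right]
        _ ≤ 2/n := by linarith
    have hc01 : c ∈ Set.Icc (0:ℝ) 1 := ⟨le_trans hx.1 hxc, hc1⟩
    have h1 : IntervalIntegrable f volume 0 x := hII 0 x ⟨le_refl 0, zero_le_one⟩ hx
    have h2 : IntervalIntegrable f volume x c := hII x c hx hc01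
    rw [show Sop 0 f x = ∫ t in (0:ℝ)..x, f t from rfl, hSopn0 x hx, ← hbdef, ← hcdef]
    have hsplit : (∫ t in (0:ℝ)..x, f t) - ∫ t in (0:ℝ)..c, f t
        = -(∫ t in x..c, f t) := by
      rw [← intervalIntegral.integral_add_adjacent_intervals h1 h2]; ring
    rw [hsplit, abs_neg]
    have hbound := intervalIntegral.norm_integral_le_of_norm_le_const (C := M₀)
      (f := f) (a := x) (b := c) ?_
    · rw [Real.norm_eq_abs] at hbound
      calc |∫ t in x..c, f t| ≤ M₀ * |c - x| := hbound
        _ ≤ M₀ * (2/n) := by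
            refine mul_le_mul_of_nonneg_left ?_ hM₀0
            rw [abs_of_nonneg (by linarith)]; exact hcx
        _ = 2/n * M₀ := mul_comm _ _
    · intro y hy
      rw [Set.uIoc_of_le hxc] at hy
      rw [Real.norm_eq_abs]
      exact hM₀le y ⟨le_trans hx.1 hy.1.le, le_trans hy.2 hc1⟩
  -- relation between i = 1 and i = 0
  have key1 : ∀ x ∈ Set.Icc (0:ℝ) 1,
      Sop 1 f x - Sopn 1 n f x = -(Sop 0 f x - Sopn 0 n f x) := by
    intro x hx
    have h1 : IntervalIntegrable f volume 0 x := hII 0 x ⟨le_refl 0, zero_le_one⟩ hx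
    have h2 : IntervalIntegrable f volume x 1 := hII x 1 hx ⟨zero_le_one, le_refl 1⟩
    have h01 : IntervalIntegrable f volume 0 1 := hII 0 1 ⟨le_refl 0, zero_le_one⟩ ⟨zero_le_one, le_refl 1⟩
    have hK : IntervalIntegrable (fun y => Kn 0 n x y * f y) volume 0 1 := by
      set b : ℝ := ((⌊((n:ℝ)+1)*x⌋ : ℝ) + 1)/n with hbdef
      have hker : (fun y => Kn 0 n x y * f y) = Set.indicator (Set.Iio b) f := by
        funext y
        have hcond : (⌊(n:ℝ)*y⌋ ≤ ⌊((n:ℝ)+1)*x⌋) ↔ y < b := by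
          rw [hbdef, lt_div_iff₀ hnpos, ← Int.lt_add_one_iff]
          rw [show ((⌊((n:ℝ)+1)*x⌋ : ℝ) + 1) = ((⌊((n:ℝ)+1)*x⌋ + 1 : ℤ) : ℝ) by push_cast; ring,
            ← Int.floor_lt]
          rw [mul_comm]
        simp only [Kn, K0n, ge_iff_le, hcond, if_pos rfl]
        by_cases h : y < b <;> simp [Set.indicator, h]
      rw [hker, intervalIntegrable_iff_integrableOn_Ioc_of_le zero_le_one]
      exact ((hInt.mono_set Set.Ioc_subset_Icc_self).indicator measurableSet_Iio)
    have hSopn1 : Sopn 1 n f x = (∫ t in (0:ℝ)..1, f t) - Sopn 0 n f x := by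
      rw [Sopn, Sopn]
      rw [show (fun y => Kn 1 n x y * f y) = fun y => f y - Kn 0 n x y * f y by
        funext y; simp only [Kn]; norm_num; ring]
      exact intervalIntegral.integral_sub h01 hK
    have hSop1 : Sop 1 f x = (∫ t in (0:ℝ)..1, f t) - Sop 0 f x := by
      rw [show Sop 1 f x = ∫ t in x..(1:ℝ), f t from rfl,
        show Sop 0 f x = ∫ t in (0:ℝ)..x, f t from rfl,
        ← intervalIntegral.integral_add_adjacent_intervals h1 h2]
      ring
    rw [hSopn1, hSop1]; ring
  -- conclusion
  intro i
  refine ciSup_le fun x => ?_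
  have hx := x.2
  fin_cases i
  · exact le_trans (key0 x hx) (by rw [hM₀def])
  · rw [show (⟨1, by norm_num⟩ : Fin 2) = 1 from rfl, key1 x hx, abs_neg]
    exact le_trans (key0 x hx) (by rw [hM₀def])
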